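/- Let x ∈ (1/2, 1) be irrational with by-excess digits b_1, b_2, …. Then the regular continued fraction partial quotients of x are (1, n_1 − 1, b_{t_1} − 2, n_2, b_{t_2} − 2, n_3, …); that is, a_1(x) = 1, a_2(x) = n_1 − 1, and for all j ≥ 1, a_{2j+1}(x) = b_{t_j} − 2 and a_{2j+2}(x) = n_{j+1}. -/

import Mathlib

open Set Filter

/-- The Gauss map `G(t) = 1/t − ⌊1/t⌋`. -/
noncomputable def gmap (t : ℝ) : ℝ := 1 / t - ⌊1 / t⌋

/-- `ra y n = a_{n+1}(y) = ⌊1/G^n(y)⌋`, the regular continued fraction partial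
quotients of `y`. -/
noncomputable def ra (y : ℝ) (n : ℕ) : ℤ := ⌊1 / (gmap^[n] y)⌋

/-- The by-excess continued fraction map `A_0(x) = ⌊1/x + 1⌋ − 1/x`. -/
noncomputable def exm (x : ℝ) : ℝ := ⌊1 / x + 1⌋ - 1 / x

/-- `bEx x n = b_{n+1} = ⌊1/A_0^n(x) + 1⌋`, the by-excess digits of `x`. -/
noncomputable def bEx (x : ℝ) (n : ℕ) : ℤ := ⌊1 / (exm^[n] x) + 1⌋

/-- Given the increasing enumeration `t` (0-indexed: `t j` is the paper's `t_{j+1}`),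
`nOf t j` is the paper's `n_{j+1}`: `n_1 = t_1` and `n_{j+1} = t_{j+1} − t_j`. -/
def nOf (t : ℕ → ℕ) : ℕ → ℕ
  | 0 => t 0
  | j + 1 => t (j + 1) - t j

lemma gstep (x : ℝ) (k : ℕ) : gmap^[k+1] x = 1 / gmap^[k] x - ra x k := by
  rw [Function.iterate_succ_apply']; rfl

lemma exm_mem (y : ℝ) (hy : y ∈ Set.Ioo (0:ℝ) 1) (hirr : Irrational y) :
    exm y ∈ Set.Ioo (0:ℝ) 1 ∧ Irrational (exm y) := by
  obtain ⟨h0, h1⟩ := hy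
  have hinv : Irrational (1 / y) := by rw [one_div]; exact hirr.inv
  have hlow : (⌊1 / y⌋ : ℝ) < 1 / y :=
    lt_of_le_of_ne (Int.floor_le _) (fun h => hinv.ne_int _ h.symm)
  have hhigh : 1 / y < ⌊1 / y⌋ + 1 := Int.lt_floor_add_one _
  have hfl : ⌊1 / y + 1⌋ = ⌊1 / y⌋ + 1 := Int.floor_add_one _
  refine ⟨⟨?_, ?_⟩, ?_⟩
  · simp only [exm, hfl]; push_cast; linarith
  · simp only [exm, hfl]; push_cast; linarith
  · have : Irrational ((⌊1 / y + 1⌋ : ℤ) - 1 / y) := hinv.intCast_sub _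
    simpa [exm] using this

lemma exIter (x : ℝ) (hx : x ∈ Set.Ioo (0:ℝ) 1) (hirr : Irrational x) (n : ℕ) :
    exm^[n] x ∈ Set.Ioo (0:ℝ) 1 ∧ Irrational (exm^[n] x) := by
  induction n with
  | zero => exact ⟨hx, hirr⟩
  | succ n ih =>
    rw [Function.iterate_succ_apply']
    exact exm_mem _ ih.1 ih.2

lemma exRec (x : ℝ) (hx : x ∈ Set.Ioo (0:ℝ) 1) (hirr : Irrational x) (n : ℕ) :
    1 / exm^[n] x = (bEx x n : ℝ) - exm^[n+1] x ∧ 2 ≤ bEx x n := by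
  obtain ⟨⟨h0, h1⟩, hirr'⟩ := exIter x hx hirr n
  constructor
  · rw [Function.iterate_succ_apply']
    simp only [exm, bEx]
    ring
  · rw [bEx, Int.le_floor]
    have : (1:ℝ) < 1 / exm^[n] x := by rw [lt_div_iff₀ h0]; linarith
    push_cast
    linarith

lemma run (x : ℝ) (hx : x ∈ Set.Ioo (0:ℝ) 1) (hirr : Irrational x) (n m : ℕ)
    (h2 : ∀ i, i < m → bEx x (n + i) = 2) :
    exm^[n] x * ((m:ℝ) + 1 - m * exm^[n + m] x)
      = m - ((m:ℝ) - 1) * exm^[n + m] x := by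
  induction m with
  | zero => simp only [Nat.add_zero, Nat.cast_zero]; ring
  | succ m ih =>
    have hm := ih (fun i hi => h2 i (Nat.lt_succ_of_lt hi))
    obtain ⟨hrec, -⟩ := exRec x hx hirr (n + m)
    obtain ⟨⟨hU0, -⟩, -⟩ := exIter x hx hirr (n + m)
    have hb : bEx x (n + m) = 2 := h2 m (Nat.lt_succ_self m)
    rw [hb] at hrec
    push_cast at hrec
    have key : exm^[n+m] x * (2 - exm^[n+m+1] x) = 1 := by
      rw [← hrec, mul_one_div_cancel (ne_of_gt hU0)]
    have hnm : n + (m + 1) = (n + m) + 1 := by omega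
    rw [hnm]
    push_cast
    linear_combination (2 - exm^[n+m+1] x) * hm +
      ((m:ℝ) * exm^[n] x - (m:ℝ) + 1) * key

lemma block (x : ℝ) (hx : x ∈ Set.Ioo (0:ℝ) 1) (hirr : Irrational x)
    (k n m : ℕ)
    (hw : gmap^[k] x = 1 - exm^[n] x)
    (h2 : ∀ i, i < m → bEx x (n + i) = 2)
    (hc : 3 ≤ bEx x (n + m)) :
    ra x k = (m : ℤ) + 1 ∧ ra x (k + 1) = bEx x (n + m) - 2 ∧
      gmap^[k + 2] x = 1 - exm^[n + m + 1] x := by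
  obtain ⟨⟨hU0, hU1⟩, -⟩ := exIter x hx hirr (n + m)
  obtain ⟨⟨hV0, hV1⟩, -⟩ := exIter x hx hirr (n + m + 1)
  obtain ⟨hrec, -⟩ := exRec x hx hirr (n + m)
  set U := exm^[n + m] x with hUdef
  set V := exm^[n + m + 1] x with hVdef
  set c := bEx x (n + m) with hcdef
  have hc3 : (3:ℝ) ≤ (c:ℝ) := by exact_mod_cast hc
  have hUne : U ≠ 0 := ne_of_gt hU0
  have hU2 : 2 * U < 1 := by
    have h2U : (2:ℝ) < 1 / U := by rw [hrec]; linarith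
    rw [lt_div_iff₀ hU0] at h2U; linarith
  have hrun := run x hx hirr n m h2
  have hD : (0:ℝ) < (m:ℝ) + 1 - m * U := by
    nlinarith [Nat.cast_nonneg (α := ℝ) m]
  have h1U : (0:ℝ) < 1 - U := by linarith
  have hwk : gmap^[k] x = (1 - U) / ((m:ℝ) + 1 - m * U) := by
    rw [hw, eq_div_iff (ne_of_gt hD)]
    linear_combination -hrun
  have hQ : 1 / gmap^[k] x = ((m:ℝ) + 1 - m * U) / (1 - U) := by
    rw [hwk, one_div_div]
  have hrk : ra x k = (m:ℤ) + 1 := by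
    have hr : ra x k = ⌊1 / gmap^[k] x⌋ := rfl
    rw [hr, hQ, Int.floor_eq_iff]
    push_cast
    constructor
    · rw [le_div_iff₀ h1U]; nlinarith
    · rw [div_lt_iff₀ h1U]; nlinarith
  have hwk1 : gmap^[k+1] x = U / (1 - U) := by
    rw [gstep, hQ, hrk]
    push_cast
    field_simp
    ring
  have hQ1 : 1 / gmap^[k+1] x = (c:ℝ) - V - 1 := by
    rw [hwk1, one_div_div, sub_div, div_self hUne, hrec]
  have hrk1 : ra x (k+1) = c - 2 := by
    have hr : ra x (k+1) = ⌊1 / gmap^[k+1] x⌋ := rfl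
    rw [hr, hQ1, Int.floor_eq_iff]
    push_cast
    constructor <;> linarith
  have hwk2 : gmap^[k+2] x = 1 - V := by
    rw [show k + 2 = (k+1) + 1 from by omega, gstep, hQ1, hrk1]
    push_cast
    ring
  exact ⟨hrk, hrk1, hwk2⟩

/-- Proposition 2.8: let `x ∈ (1/2,1)` be irrational with by-excess digits
`b_1, b_2, …`, and let `t_1 < t_2 < ⋯` enumerate `{n ≥ 1 : b_n ≥ 3}` (here `t j` is
the paper's `t_{j+1}`). Then the regular continued fraction of `x` is
`(1, n_1 − 1, b_{t_1} − 2, n_2, b_{t_2} − 2, n_3, …)`, i.e. `a_1(x) = 1`,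
`a_2(x) = n_1 − 1`, and for all `j ≥ 1`, `a_{2j+1}(x) = b_{t_j} − 2` and
`a_{2j+2}(x) = n_{j+1}`. -/
theorem cf_via_excess_big (x : ℝ) (hirr : Irrational x)
    (hx : x ∈ Set.Ioo (1 / 2 : ℝ) 1) (t : ℕ → ℕ)
    (ht1 : ∀ j, 1 ≤ t j) (hmono : StrictMono t)
    (hmem : ∀ j, 3 ≤ bEx x (t j - 1))
    (hall : ∀ n : ℕ, 3 ≤ bEx x n → ∃ j, t j = n + 1) :
    ra x 0 = 1 ∧ ra x 1 = (nOf t 0 : ℤ) - 1 ∧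
      ∀ j : ℕ, ra x (2 * j + 2) = bEx x (t j - 1) - 2 ∧
        ra x (2 * j + 3) = (nOf t (j + 1) : ℤ) := by

  obtain ⟨hxh, hx1⟩ := hx
  have hx0 : (0:ℝ) < x := by linarith
  have hx01 : x ∈ Set.Ioo (0:ℝ) 1 := ⟨hx0, hx1⟩
  have h1x : 1 < 1 / x := by rw [lt_div_iff₀ hx0]; linarith
  have h1x2 : 1 / x < 2 := by rw [div_lt_iff₀ hx0]; linarith
  have hra0 : ra x 0 = 1 := by
    have hr : ra x 0 = ⌊1 / x⌋ := rfl
    rw [hr, Int.floor_eq_iff]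
    push_cast
    constructor <;> linarith
  have hb0 : bEx x 0 = 2 := by
    have hr : bEx x 0 = ⌊1 / x + 1⌋ := rfl
    rw [hr, Int.floor_eq_iff]
    push_cast
    constructor <;> linarith
  have hw1 : gmap^[1] x = 1 - exm^[1] x := by
    obtain ⟨hrec0, -⟩ := exRec x hx01 hirr 0
    rw [hb0] at hrec0
    simp only [Function.iterate_zero, id_eq, zero_add] at hrec0
    push_cast at hrec0
    have e1 : gmap^[0+1] x = 1 / gmap^[0] x - ra x 0 := gstep x 0
    simp only [Function.iterate_zero, id_eq, zero_add, hra0] at e1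
    rw [e1]
    push_cast
    linarith
  have ht02 : 2 ≤ t 0 := by
    by_contra h
    have h1 : t 0 = 1 := by have := ht1 0; omega
    have h3 := hmem 0
    rw [h1] at h3
    simp only [Nat.sub_self] at h3
    omega
  have hgap : ∀ i : ℕ, (∀ j, t j ≠ i + 1) → bEx x i = 2 := by
    intro i hi
    by_contra h
    obtain ⟨-, h2⟩ := exRec x hx01 hirr i
    have h3 : 3 ≤ bEx x i := by omega
    obtain ⟨j, hj⟩ := hall i h3
    exact hi j hj
  have hbase := block x hx01 hirr 1 1 (t 0 - 2) hw1
    (by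
      intro i hi
      apply hgap
      intro j hj
      have h' : t j < t 0 := by omega
      have := hmono.lt_iff_lt.mp h'
      omega)
    (by
      rw [show 1 + (t 0 - 2) = t 0 - 1 from by omega]
      exact hmem 0)
  obtain ⟨hra1, hra2, hw3⟩ := hbase
  rw [show 1 + (t 0 - 2) = t 0 - 1 from by omega] at hra2
  rw [show 1 + (t 0 - 2) + 1 = t 0 from by omega] at hw3
  have hstep : ∀ j : ℕ, gmap^[2*j+3] x = 1 - exm^[t j] x →
      ra x (2*j+3) = ((t (j+1) - t j : ℕ) : ℤ) ∧
      ra x (2*j+4) = bEx x (t (j+1) - 1) - 2 ∧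
      gmap^[2*j+5] x = 1 - exm^[t (j+1)] x := by
    intro j hj
    have hlt : t j < t (j+1) := hmono (Nat.lt_succ_self j)
    have hb := block x hx01 hirr (2*j+3) (t j) (t (j+1) - t j - 1) hj
      (by
        intro i hi
        apply hgap
        intro kk hk
        have h1 : t j < t kk := by omega
        have h2 : t kk < t (j+1) := by omega
        have e1 := hmono.lt_iff_lt.mp h1
        have e2 := hmono.lt_iff_lt.mp h2
        omega)
      (by
        rw [show t j + (t (j+1) - t j - 1) = t (j+1) - 1 from by omega]
        exact hmem (j+1))
    obtain ⟨hA, hB, hC⟩ := hb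
    rw [show t j + (t (j+1) - t j - 1) = t (j+1) - 1 from by omega] at hB
    rw [show t j + (t (j+1) - t j - 1) + 1 = t (j+1) from by omega] at hC
    refine ⟨?_, ?_, ?_⟩
    · rw [hA]; omega
    · rw [show 2*j+4 = 2*j+3+1 from by omega]; exact hB
    · rw [show 2*j+5 = 2*j+3+2 from by omega]; exact hC
  have hinv : ∀ j, gmap^[2*j+3] x = 1 - exm^[t j] x := by
    intro j
    induction j with
    | zero => simpa using hw3
    | succ j ih =>
      rw [show 2*(j+1)+3 = 2*j+5 from by omega]
      exact (hstep j ih).2.2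
  refine ⟨hra0, ?_, ?_⟩
  · rw [hra1]
    simp only [nOf]
    omega
  · intro j
    constructor
    · cases j with
      | zero => simpa using hra2
      | succ j =>
        rw [show 2*(j+1)+2 = 2*j+4 from by omega]
        exact (hstep j (hinv j)).2.1
    · have h := (hstep j (hinv j)).1
      rw [h]
      simp only [nOf]
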